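/- Let C ⊆ ℝ^n and D ⊆ ℝ^m be nonempty compact convex sets, L ∈ ℝ^{m×n}, s ∈ ℝ^n, b ∈ ℝ^m, τ > 0, and define g(u,v) = ⟨u,s⟩ + ⟨Lu,v⟩ − ⟨b,v⟩, f(u) = max_{v∈D} g(u,v), f_D(v) = min_{u∈C} g(u,v). Run the Douglas–Rachford iteration: from arbitrary ū⁽⁰⁾ ∈ ℝ^n, w̄⁽⁰⁾ ∈ ℝ^m, for k = 0,1,2,… set u⁽ᵏ⁾ := Π_C(ū⁽ᵏ⁾ − τs), w''⁽ᵏ⁾ := Π_D((1/τ)(w̄⁽ᵏ⁾ − b)), u'⁽ᵏ⁾ := (I + LᵀL)^{−1}((2u⁽ᵏ⁾ − ū⁽ᵏ⁾) + Lᵀ(w̄⁽ᵏ⁾ − 2τ w''⁽ᵏ⁾)), w'⁽ᵏ⁾ := L u'⁽ᵏ⁾, ū⁽ᵏ⁺¹⁾ := ū⁽ᵏ⁾ + u'⁽ᵏ⁾ − u⁽ᵏ⁾, w̄⁽ᵏ⁺¹⁾ := w'⁽ᵏ⁾ + τ w''⁽ᵏ⁾. Then the iterates form a sequence of primal/dual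 feasible pairs (u⁽ᵏ⁾, w''⁽ᵏ⁾) ∈ C × D such that, for any saddle point (u*, v*) of g over C × D, f(u⁽ᵏ⁾) → f(u*) = f_D(v*) and f_D(w''⁽ᵏ⁾) → f_D(v*) = f(u*) as k → ∞; moreover f(u⁽ᵏ⁾) − f(u*) ≤ f(u⁽ᵏ⁾) − f_D(w''⁽ᵏ⁾) for every k. -/

import Mathlib

open scoped RealInnerProductSpace
open Filter

section helpers
variable {H : Type*} [NormedAddCommGroup H] [InnerProductSpace ℝ H]

/-- variational inequality of a nearest-point projection onto a convex set -/
lemma proj_vi {K : Set H} (hK : Convex ℝ K) {y z : H} (hz : z ∈ K)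
    (hmin : ∀ x ∈ K, ‖y - z‖ ≤ ‖y - x‖) : ∀ x ∈ K, ⟪y - z, x - z⟫ ≤ 0 := by
  intro x hx
  by_contra hcon
  push_neg at hcon
  set a := ⟪y - z, x - z⟫ with ha
  set c := ‖x - z‖^2 with hc
  have hcpos : 0 < c := by
    rcases eq_or_ne x z with rfl | hne
    · simp [ha] at hcon
    · have h0 : x - z ≠ 0 := sub_ne_zero.mpr hne
      have := norm_pos_iff.mpr h0
      positivity
  set t := min 1 (a / c) with htdef
  have ht0 : 0 < t := lt_min one_pos (div_pos hcon hcpos)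
  have ht1 : t ≤ 1 := min_le_left _ _
  have hmem : z + t • (x - z) ∈ K := by
    have h2 := hK hz hx (by linarith : (0:ℝ) ≤ 1 - t) (le_of_lt ht0) (by ring)
    convert h2 using 1
    module
  have hle := hmin _ hmem
  have hexp : ‖y - (z + t • (x - z))‖^2 = ‖y - z‖^2 - 2*t*a + t^2 * c := by
    have h3 : y - (z + t • (x - z)) = (y - z) - t • (x - z) := by module
    rw [h3, norm_sub_sq_real, real_inner_smul_right, norm_smul]
    rw [Real.norm_eq_abs, mul_pow, sq_abs]
    rw [← ha, ← hc]; ring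
  have h2 : ‖y - z‖^2 ≤ ‖y - (z + t • (x - z))‖^2 := by
    nlinarith [norm_nonneg (y - z), norm_nonneg (y - (z + t • (x - z)))]
  have h3 : 2 * a ≤ t * c := by nlinarith
  have h4 : t * c ≤ a := by
    have h5 : t ≤ a / c := min_le_right _ _
    calc t * c ≤ (a / c) * c := by nlinarith
    _ = a := by field_simp
  linarith

/-- uniqueness: any nearest point equals a point satisfying the VI -/
lemma proj_unique {K : Set H} {y z : H} (hz : z ∈ K)
    (hvi : ∀ x ∈ K, ⟪y - z, x - z⟫ ≤ 0) {p : H} (hp : p ∈ K)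
    (hpmin : ∀ x ∈ K, ‖y - p‖ ≤ ‖y - x‖) : p = z := by
  have h1 : ‖y - p‖^2 = ‖y - z‖^2 - 2*⟪y - z, p - z⟫ + ‖p - z‖^2 := by
    have h0 : y - p = (y - z) - (p - z) := by abel
    rw [h0, norm_sub_sq_real]
  have h2 := hvi p hp
  have h3 := hpmin z hz
  have h4 : ‖y - p‖^2 ≤ ‖y - z‖^2 := by
    nlinarith [norm_nonneg (y - p), norm_nonneg (y - z)]
  have h5 : ‖p - z‖^2 ≤ 0 := by nlinarith
  have h6 : ‖p - z‖ = 0 := by nlinarith [norm_nonneg (p - z)]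
  have := norm_eq_zero.mp h6
  rw [sub_eq_zero] at this
  exact this

/-- firm nonexpansiveness of a nearest-point projection -/
lemma proj_firm {K : Set H} (hK : Convex ℝ K) (P : H → H)
    (hP : ∀ y, P y ∈ K ∧ ∀ x ∈ K, ‖y - P y‖ ≤ ‖y - x‖) :
    ∀ a b, ‖P a - P b‖^2 ≤ ⟪a - b, P a - P b⟫ := by
  intro a b
  have h1 := proj_vi hK (hP a).1 (hP a).2 (P b) (hP b).1
  have h2 := proj_vi hK (hP b).1 (hP b).2 (P a) (hP a).1
  have e : ⟪a - b, P a - P b⟫ - ‖P a - P b‖^2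
      = -⟪a - P a, P b - P a⟫ - ⟪b - P b, P a - P b⟫ := by
    rw [← real_inner_self_eq_norm_sq]
    have h3 : a - b = ((a - P a) - (b - P b)) + (P a - P b) := by abel
    rw [h3, inner_add_left, inner_sub_left]
    have h4 : ⟪a - P a, P b - P a⟫ = -⟪a - P a, P a - P b⟫ := by
      rw [show P b - P a = -(P a - P b) by abel, inner_neg_right]
    rw [h4]; ring
  linarith


lemma comp1_firm (P : H → H)
    (firmP : ∀ a b, ‖P a - P b‖^2 ≤ ⟪a - b, P a - P b⟫) (τ : ℝ) (s a b : H) :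
    ‖P (a - τ • s) - P (b - τ • s)‖^2 ≤ ⟪a - b, P (a - τ • s) - P (b - τ • s)⟫ := by
  have h := firmP (a - τ • s) (b - τ • s)
  have e : (a - τ • s) - (b - τ • s) = a - b := by module
  rwa [e] at h

lemma comp2_firm (P : H → H)
    (firmP : ∀ a b, ‖P a - P b‖^2 ≤ ⟪a - b, P a - P b⟫) (τ : ℝ) (hτ : 0 < τ)
    (b ca cb : H) :
    ‖(ca - τ • P ((1/τ) • (ca - b))) - (cb - τ • P ((1/τ) • (cb - b)))‖^2
      ≤ ⟪ca - cb, (ca - τ • P ((1/τ) • (ca - b))) - (cb - τ • P ((1/τ) • (cb - b)))⟫ := by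
  set pa := P ((1/τ) • (ca - b)) with hpa
  set pb := P ((1/τ) • (cb - b)) with hpb
  have hfd := firmP ((1/τ) • (ca - b)) ((1/τ) • (cb - b))
  have e : (1/τ) • (ca - b) - (1/τ) • (cb - b) = (1/τ) • (ca - cb) := by module
  rw [e, real_inner_smul_left] at hfd
  have hfd' : τ * ‖pa - pb‖^2 ≤ ⟪ca - cb, pa - pb⟫ := by
    have h := mul_le_mul_of_nonneg_left hfd hτ.le
    have e2 : τ * (1/τ * ⟪ca - cb, pa - pb⟫) = ⟪ca - cb, pa - pb⟫ := by
      field_simp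
    linarith
  have e3 : (ca - τ • pa) - (cb - τ • pb) = (ca - cb) - τ • (pa - pb) := by module
  rw [e3, norm_sub_sq_real, inner_sub_right, real_inner_smul_right,
    norm_smul, Real.norm_eq_abs, mul_pow, sq_abs, real_inner_self_eq_norm_sq]
  nlinarith [hfd', hτ, sq_nonneg ‖pa - pb‖]

lemma graph_firm {F : Type*} [NormedAddCommGroup F] [InnerProductSpace ℝ F]
    (L : H →L[ℝ] F) (Lt : F →L[ℝ] H) (hadj : ∀ v x, ⟪Lt v, x⟫ = ⟪v, L x⟫)
    (sa sb pa pb : H) (qa qb : F)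
    (hda : sa + Lt (L sa) = pa + Lt qa) (hdb : sb + Lt (L sb) = pb + Lt qb) :
    ‖sa - sb‖^2 + ‖L sa - L sb‖^2 ≤ ⟪pa - pb, sa - sb⟫ + ⟪qa - qb, L sa - L sb⟫ := by
  have hrel : (sa - sb) + Lt (L (sa - sb)) = (pa - pb) + Lt (qa - qb) := by
    rw [map_sub L, map_sub Lt, map_sub Lt]
    have e : (sa - sb) + (Lt (L sa) - Lt (L sb)) = (sa + Lt (L sa)) - (sb + Lt (L sb)) := by
      abel
    rw [e, hda, hdb]
    abel
  have key : ⟪pa - pb, sa - sb⟫ + ⟪qa - qb, L sa - L sb⟫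
      = ‖sa - sb‖^2 + ‖L sa - L sb‖^2 := by
    rw [← map_sub L, ← hadj (qa - qb) (sa - sb), ← inner_add_left, ← hrel,
      inner_add_left, hadj, map_sub L]
    simp [real_inner_self_eq_norm_sq]
  linarith

/-- firm implies nonexpansive -/
lemma firm_nonexp {P : H → H}
    (h : ∀ a b, ‖P a - P b‖^2 ≤ ⟪a - b, P a - P b⟫) :
    ∀ a b, ‖P a - P b‖ ≤ ‖a - b‖ := by
  intro a b
  have h1 := h a b
  have h2 := real_inner_le_norm (a - b) (P a - P b)
  nlinarith [norm_nonneg (P a - P b), norm_nonneg (a - b)]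

lemma refl_nonexp_sq {P : H → H}
    (h : ∀ a b, ‖P a - P b‖^2 ≤ ⟪a - b, P a - P b⟫) (a b : H) :
    ‖((2:ℝ) • P a - a) - ((2:ℝ) • P b - b)‖^2 ≤ ‖a - b‖^2 := by
  have h1 := h a b
  have e : ((2:ℝ) • P a - a) - ((2:ℝ) • P b - b) = (2:ℝ) • (P a - P b) - (a - b) := by module
  rw [e, norm_sub_sq_real, norm_smul, real_inner_smul_left]
  have : ⟪P a - P b, a - b⟫ = ⟪a - b, P a - P b⟫ := real_inner_comm _ _
  rw [Real.norm_eq_abs, mul_pow, sq_abs]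
  nlinarith

/-- Convergence of the Douglas–Rachford iteration built from two firmly
nonexpansive maps, given some fixed point of the DR operator. -/
lemma dr_main [ProperSpace H] (P1 P2 : H → H)
    (h1 : ∀ a b, ‖P1 a - P1 b‖^2 ≤ ⟪a - b, P1 a - P1 b⟫)
    (h2 : ∀ a b, ‖P2 a - P2 b‖^2 ≤ ⟪a - b, P2 a - P2 b⟫)
    (T : H → H) (hT : ∀ x, T x = x + P2 ((2:ℝ) • P1 x - x) - P1 x)
    (x : ℕ → H) (hx : ∀ k, x (k+1) = T (x k))
    (z : H) (hz : T z = z) :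
    ∃ xh, T xh = xh ∧ Filter.Tendsto x Filter.atTop (nhds xh) := by
  classical
  set R : H → H := fun w => (2:ℝ) • P2 ((2:ℝ) • P1 w - w) - ((2:ℝ) • P1 w - w) with hR
  have hRne : ∀ w w', ‖R w - R w'‖^2 ≤ ‖w - w'‖^2 := by
    intro w w'
    calc ‖R w - R w'‖^2 ≤ ‖((2:ℝ) • P1 w - w) - ((2:ℝ) • P1 w' - w')‖^2 :=
          refl_nonexp_sq h2 _ _
    _ ≤ ‖w - w'‖^2 := refl_nonexp_sq h1 w w'
  have hTR : ∀ w, T w = (2⁻¹:ℝ) • (w + R w) := by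
    intro w; rw [hT, hR]; module
  have key : ∀ w w', ‖T w - T w'‖^2 + ‖(w - T w) - (w' - T w')‖^2 ≤ ‖w - w'‖^2 := by
    intro w w'
    have e1 : T w - T w' = (2⁻¹:ℝ) • ((w - w') + (R w - R w')) := by
      rw [hTR w, hTR w']; module
    have e2 : (w - T w) - (w' - T w') = (2⁻¹:ℝ) • ((w - w') - (R w - R w')) := by
      rw [hTR w, hTR w']; module
    have hpar := parallelogram_law_with_norm ℝ (w - w') (R w - R w')
    have hr := hRne w w'
    rw [e1, e2, norm_smul, norm_smul]
    rw [Real.norm_eq_abs]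
    have : |(2⁻¹:ℝ)| = 2⁻¹ := by norm_num
    rw [this]
    nlinarith [norm_nonneg ((w - w') + (R w - R w')), norm_nonneg ((w - w') - (R w - R w'))]
  have hTnonexp : ∀ w w', ‖T w - T w'‖ ≤ ‖w - w'‖ := by
    intro w w'
    have := key w w'
    nlinarith [norm_nonneg (T w - T w'), norm_nonneg (w - w'),
      sq_nonneg ‖(w - T w) - (w' - T w')‖]
  have keyz : ∀ k, ‖x (k+1) - z‖^2 + ‖x k - x (k+1)‖^2 ≤ ‖x k - z‖^2 := by
    intro k
    have := key (x k) z
    rw [hz] at this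
    rw [hx k]
    simpa using this
  have hanti : Antitone fun k => ‖x k - z‖ := by
    apply antitone_nat_of_succ_le
    intro k
    have := keyz k
    have h0 := sq_nonneg ‖x k - x (k+1)‖
    nlinarith [norm_nonneg (x (k+1) - z), norm_nonneg (x k - z)]
  have hbddb : BddBelow (Set.range fun k => ‖x k - z‖) := ⟨0, by rintro _ ⟨k, rfl⟩; positivity⟩
  have hdist : Tendsto (fun k => ‖x k - z‖) atTop (nhds (⨅ k, ‖x k - z‖)) :=
    tendsto_atTop_ciInf hanti hbddb
  have hdistsq : Tendsto (fun k => ‖x k - z‖^2) atTop (nhds ((⨅ k, ‖x k - z‖)^2)) :=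
    hdist.pow 2
  have hdistsq' : Tendsto (fun k => ‖x (k+1) - z‖^2) atTop (nhds ((⨅ k, ‖x k - z‖)^2)) :=
    hdistsq.comp (tendsto_add_atTop_nat 1)
  have hgap : Tendsto (fun k => ‖x k - z‖^2 - ‖x (k+1) - z‖^2) atTop (nhds 0) := by
    have := hdistsq.sub hdistsq'
    simpa using this
  have hregsq : Tendsto (fun k => ‖x k - x (k+1)‖^2) atTop (nhds 0) := by
    apply tendsto_of_tendsto_of_tendsto_of_le_of_le tendsto_const_nhds hgap
    · intro k; dsimp only; positivity
    · intro k; dsimp only; have := keyz k; linarith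
  have hreg : Tendsto (fun k => ‖x k - x (k+1)‖) atTop (nhds 0) := by
    have hs := (Real.continuous_sqrt.tendsto 0).comp hregsq
    simp only [Real.sqrt_zero] at hs
    convert hs using 2 with k
    simp [Function.comp, Real.sqrt_sq (norm_nonneg _)]
  have hdiff0 : Tendsto (fun k => x (k+1) - x k) atTop (nhds 0) := by
    rw [tendsto_zero_iff_norm_tendsto_zero]
    simpa [norm_sub_rev] using hreg
  have hbound : ∀ k, x k ∈ Metric.closedBall z ‖x 0 - z‖ := by
    intro k
    rw [Metric.mem_closedBall, dist_eq_norm]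
    exact hanti (Nat.zero_le k)
  obtain ⟨xh, -, φ, hφ, hφtend⟩ :=
    tendsto_subseq_of_bounded Metric.isBounded_closedBall hbound
  have hc1 : Continuous P1 := by
    have : LipschitzWith 1 P1 := by
      apply LipschitzWith.of_dist_le_mul
      intro a b
      rw [dist_eq_norm, dist_eq_norm, NNReal.coe_one, one_mul]
      exact firm_nonexp h1 a b
    exact this.continuous
  have hc2 : Continuous P2 := by
    have : LipschitzWith 1 P2 := by
      apply LipschitzWith.of_dist_le_mul
      intro a b
      rw [dist_eq_norm, dist_eq_norm, NNReal.coe_one, one_mul]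
      exact firm_nonexp h2 a b
    exact this.continuous
  have hcT : Continuous T := by
    have : T = fun x => x + P2 ((2:ℝ) • P1 x - x) - P1 x := funext hT
    rw [this]
    exact (continuous_id.add (hc2.comp ((hc1.const_smul (2:ℝ)).sub continuous_id))).sub hc1
  have hfix : T xh = xh := by
    have l1 : Tendsto (fun j => x (φ j + 1)) atTop (nhds (T xh)) := by
      have := (hcT.tendsto xh).comp hφtend
      convert this using 2 with j
      exact hx (φ j)
    have l2 : Tendsto (fun j => x (φ j + 1)) atTop (nhds xh) := by
      have hd := hdiff0.comp (hφ.tendsto_atTop)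
      have := hd.add hφtend
      simp only [zero_add] at this
      convert this using 2 with j
      simp [Function.comp]
    exact tendsto_nhds_unique l1 l2
  refine ⟨xh, hfix, ?_⟩
  have hbanti : Antitone fun k => ‖x k - xh‖ := by
    apply antitone_nat_of_succ_le
    intro k
    rw [hx k]
    calc ‖T (x k) - xh‖ = ‖T (x k) - T xh‖ := by rw [hfix]
    _ ≤ ‖x k - xh‖ := hTnonexp _ _
  have hbbdd : BddBelow (Set.range fun k => ‖x k - xh‖) := ⟨0, by rintro _ ⟨k, rfl⟩; positivity⟩
  have hbt : Tendsto (fun k => ‖x k - xh‖) atTop (nhds (⨅ k, ‖x k - xh‖)) :=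
    tendsto_atTop_ciInf hbanti hbbdd
  have hsub0 : Tendsto (fun j => ‖x (φ j) - xh‖) atTop (nhds 0) := by
    rw [← tendsto_iff_norm_sub_tendsto_zero]
    exact hφtend
  have hsubinf : Tendsto (fun j => ‖x (φ j) - xh‖) atTop (nhds (⨅ k, ‖x k - xh‖)) :=
    hbt.comp hφ.tendsto_atTop
  have hinf0 : (⨅ k, ‖x k - xh‖) = 0 := tendsto_nhds_unique hsubinf hsub0
  rw [hinf0] at hbt
  rw [tendsto_iff_norm_sub_tendsto_zero]
  exact hbt

end helpers

/- STATEMENT 14 -/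
set_option maxHeartbeats 1000000 in
open scoped RealInnerProductSpace in
theorem stmt14 (n m : ℕ)
    (C : Set (EuclideanSpace ℝ (Fin n))) (D : Set (EuclideanSpace ℝ (Fin m)))
    (hCne : C.Nonempty) (hCcomp : IsCompact C) (hCconv : Convex ℝ C)
    (hDne : D.Nonempty) (hDcomp : IsCompact D) (hDconv : Convex ℝ D)
    (L : EuclideanSpace ℝ (Fin n) →L[ℝ] EuclideanSpace ℝ (Fin m))
    (s : EuclideanSpace ℝ (Fin n)) (b : EuclideanSpace ℝ (Fin m))
    (τ : ℝ) (hτ : 0 < τ)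
    (PC : EuclideanSpace ℝ (Fin n) → EuclideanSpace ℝ (Fin n))
    (hPC : ∀ y, PC y ∈ C ∧ ∀ x ∈ C, ‖y - PC y‖ ≤ ‖y - x‖)
    (PD : EuclideanSpace ℝ (Fin m) → EuclideanSpace ℝ (Fin m))
    (hPD : ∀ y, PD y ∈ D ∧ ∀ x ∈ D, ‖y - PD y‖ ≤ ‖y - x‖)
    (g : EuclideanSpace ℝ (Fin n) → EuclideanSpace ℝ (Fin m) → ℝ)
    (hg : ∀ u v, g u v = ⟪u, s⟫ + ⟪L u, v⟫ - ⟪b, v⟫)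
    (f : EuclideanSpace ℝ (Fin n) → ℝ) (hf : ∀ u, f u = sSup ((g u) '' D))
    (fD : EuclideanSpace ℝ (Fin m) → ℝ) (hfD : ∀ v, fD v = sInf ((fun u => g u v) '' C))
    -- the Douglas–Rachford iterates
    (ubar u up : ℕ → EuclideanSpace ℝ (Fin n))
    (wbar wpp wp : ℕ → EuclideanSpace ℝ (Fin m))
    (hu : ∀ k, u k = PC (ubar k - τ • s))
    (hwpp : ∀ k, wpp k = PD ((1 / τ) • (wbar k - b)))
    (hup : ∀ k, up k + (ContinuousLinearMap.adjoint L) (L (up k)) =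
      ((2 : ℝ) • u k - ubar k) +
        (ContinuousLinearMap.adjoint L) (wbar k - (2 * τ) • wpp k))
    (hwp : ∀ k, wp k = L (up k))
    (hubar : ∀ k, ubar (k + 1) = ubar k + up k - u k)
    (hwbar : ∀ k, wbar (k + 1) = wp k + τ • wpp k)
    -- a saddle point
    (ustar : EuclideanSpace ℝ (Fin n)) (vstar : EuclideanSpace ℝ (Fin m))
    (hustar : ustar ∈ C) (hvstar : vstar ∈ D)
    (hsaddle : ∀ u' ∈ C, ∀ v' ∈ D, g ustar v' ≤ g ustar vstar ∧ g ustar vstar ≤ g u' vstar) :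
    (∀ k, u k ∈ C ∧ wpp k ∈ D) ∧
    f ustar = g ustar vstar ∧ fD vstar = g ustar vstar ∧
    Filter.Tendsto (fun k => f (u k)) Filter.atTop (nhds (g ustar vstar)) ∧
    Filter.Tendsto (fun k => fD (wpp k)) Filter.atTop (nhds (g ustar vstar)) ∧
    ∀ k, f (u k) - f ustar ≤ f (u k) - fD (wpp k) := by
  classical
  -- ====== elementary facts about f, fD ======
  have hgDcont : ∀ u', Continuous (g u') := by
    intro u'
    have e : g u' = fun v => ⟪u', s⟫ + ⟪L u', v⟫ - ⟪b, v⟫ := funext (hg u')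
    rw [e]
    exact (continuous_const.add (continuous_const.inner continuous_id)).sub
      (continuous_const.inner continuous_id)
  have hgCcont : ∀ v, Continuous fun u' => g u' v := by
    intro v
    have e : (fun u' => g u' v) = fun u' => ⟪u', s⟫ + ⟪L u', v⟫ - ⟪b, v⟫ :=
      funext fun u' => hg u' v
    rw [e]
    exact ((continuous_id.inner continuous_const).add
      ((L.continuous.inner continuous_const))).sub continuous_const
  have hBddA : ∀ u', BddAbove ((g u') '' D) := fun u' =>
    (hDcomp.image (hgDcont u')).bddAbove
  have hBddB : ∀ v, BddBelow ((fun u' => g u' v) '' C) := fun v =>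
    (hCcomp.image (hgCcont v)).bddBelow
  have hfle : ∀ u' v, v ∈ D → g u' v ≤ f u' := by
    intro u' v hv
    rw [hf]
    exact le_csSup (hBddA u') ⟨v, hv, rfl⟩
  have hfDle : ∀ u' v, u' ∈ C → fD v ≤ g u' v := by
    intro u' v hu'
    rw [hfD]
    exact csInf_le (hBddB v) ⟨u', hu', rfl⟩
  have hfmax : ∀ u' v0, v0 ∈ D → (∀ v ∈ D, g u' v ≤ g u' v0) → f u' = g u' v0 := by
    intro u' v0 h0 hb
    rw [hf]
    apply le_antisymm
    · exact csSup_le (hDne.image _) (by rintro _ ⟨v, hv, rfl⟩; exact hb v hv)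
    · exact le_csSup (hBddA u') ⟨v0, h0, rfl⟩
  have hfDmin : ∀ v u0, u0 ∈ C → (∀ u' ∈ C, g u0 v ≤ g u' v) → fD v = g u0 v := by
    intro v u0 h0 hb
    rw [hfD]
    apply le_antisymm
    · exact csInf_le (hBddB v) ⟨u0, h0, rfl⟩
    · exact le_csInf (hCne.image _) (by rintro _ ⟨u', hu', rfl⟩; exact hb u' hu')
  have hfstar : f ustar = g ustar vstar :=
    hfmax _ _ hvstar fun v hv => (hsaddle ustar hustar v hv).1
  have hfDstar : fD vstar = g ustar vstar :=
    hfDmin _ _ hustar fun u' hu' => (hsaddle u' hu' vstar hvstar).2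
  have hweak : ∀ v ∈ D, fD v ≤ g ustar vstar := by
    intro v hv
    calc fD v ≤ g ustar v := hfDle ustar v hustar
    _ ≤ g ustar vstar := (hsaddle ustar hustar v hv).1
  have hfeas : ∀ k, u k ∈ C ∧ wpp k ∈ D := by
    intro k
    constructor
    · rw [hu]; exact (hPC _).1
    · rw [hwpp]; exact (hPD _).1
  have hlast : ∀ k, f (u k) - f ustar ≤ f (u k) - fD (wpp k) := by
    intro k
    have := hweak _ (hfeas k).2
    rw [hfstar]
    linarith
  -- ====== difference formulas for g ======
  have hgdiff_u : ∀ p q v, g p v - g q v = ⟪p - q, s⟫ + ⟪L (p - q), v⟫ := by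
    intro p q v
    rw [hg, hg, map_sub, inner_sub_left, inner_sub_left]
    ring
  have hgdiff_v : ∀ u' p q, g u' p - g u' q = ⟪L u' - b, p - q⟫ := by
    intro u' p q
    rw [hg, hg, inner_sub_left, inner_sub_right, inner_sub_right]
    ring
  -- ====== saddle point variational inequalities ======
  set Lt := ContinuousLinearMap.adjoint L with hLt
  have hadj : ∀ (v : EuclideanSpace ℝ (Fin m)) (x : EuclideanSpace ℝ (Fin n)),
      ⟪Lt v, x⟫ = ⟪v, L x⟫ := fun v x => ContinuousLinearMap.adjoint_inner_left L x v
  have hsadstar1 : ∀ x ∈ C, 0 ≤ ⟪s + Lt vstar, x - ustar⟫ := by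
    intro x hx
    have h0 := (hsaddle x hx vstar hvstar).2
    have h1 := hgdiff_u x ustar vstar
    rw [inner_add_left, hadj]
    have h2 : ⟪s, x - ustar⟫ = ⟪x - ustar, s⟫ := real_inner_comm _ _
    have h3 : ⟪vstar, L (x - ustar)⟫ = ⟪L (x - ustar), vstar⟫ := real_inner_comm _ _
    rw [h2, h3]
    linarith
  have hsadstar2 : ∀ v ∈ D, ⟪L ustar - b, v - vstar⟫ ≤ 0 := by
    intro v hv
    have h0 := (hsaddle ustar hustar v hv).1
    have h1 := hgdiff_v ustar v vstar
    linarith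
  -- ====== the resolvent of I + LᵀL ======
  set Acl : EuclideanSpace ℝ (Fin n) →L[ℝ] EuclideanSpace ℝ (Fin n) :=
    ContinuousLinearMap.id ℝ _ + Lt.comp L with hAcl
  have hAapp : ∀ v, Acl v = v + Lt (L v) := fun v => rfl
  have hAinj : Function.Injective Acl := by
    intro v w hvw
    have h0 : Acl (v - w) = 0 := by rw [map_sub, hvw, sub_self]
    have h2 : ⟪Acl (v - w), v - w⟫ = ‖v - w‖^2 + ‖L (v - w)‖^2 := by
      rw [hAapp, inner_add_left, real_inner_self_eq_norm_sq, hadj,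
        real_inner_self_eq_norm_sq]
    rw [h0, inner_zero_left] at h2
    have h4 : ‖v - w‖^2 = 0 :=
      le_antisymm (by nlinarith [sq_nonneg ‖L (v - w)‖]) (sq_nonneg _)
    have h5 : v - w = 0 := norm_eq_zero.mp (pow_eq_zero_iff two_ne_zero |>.mp h4)
    exact sub_eq_zero.mp h5
  have hAsurj : Function.Surjective Acl := by
    have h := (LinearMap.injective_iff_surjective
      (f := (Acl : EuclideanSpace ℝ (Fin n) →ₗ[ℝ] EuclideanSpace ℝ (Fin n))))
    simp only [ContinuousLinearMap.coe_coe] at h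
    exact h.mp hAinj
  set S : EuclideanSpace ℝ (Fin n) → EuclideanSpace ℝ (Fin n) :=
    fun y => (Equiv.ofBijective Acl ⟨hAinj, hAsurj⟩).symm y with hS
  have hS1 : ∀ y, S y + Lt (L (S y)) = y := by
    intro y
    have h := (Equiv.ofBijective Acl ⟨hAinj, hAsurj⟩).apply_symm_apply y
    rw [← hAapp]
    exact h
  have hSuniq : ∀ x y, x + Lt (L x) = y → S y = x := by
    intro x y hxy
    apply hAinj
    rw [hAapp, hAapp, hS1, hxy]
  -- ====== the product space ======
  haveI : FiniteDimensional ℝ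
      (WithLp 2 (EuclideanSpace ℝ (Fin n) × EuclideanSpace ℝ (Fin m))) :=
    (WithLp.linearEquiv 2 ℝ _).symm.finiteDimensional
  haveI : ProperSpace (WithLp 2 (EuclideanSpace ℝ (Fin n) × EuclideanSpace ℝ (Fin m))) :=
    FiniteDimensional.proper ℝ _
  set toH : EuclideanSpace ℝ (Fin n) × EuclideanSpace ℝ (Fin m) →
      WithLp 2 (EuclideanSpace ℝ (Fin n) × EuclideanSpace ℝ (Fin m)) :=
    ⇑(WithLp.equiv 2 (EuclideanSpace ℝ (Fin n) × EuclideanSpace ℝ (Fin m))).symm with htoH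
  have hext : ∀ x y : WithLp 2 (EuclideanSpace ℝ (Fin n) × EuclideanSpace ℝ (Fin m)),
      x.fst = y.fst → x.snd = y.snd → x = y := by
    intro x y hx1 hx2
    apply (WithLp.equiv 2 _).injective
    apply Prod.ext <;> simpa [WithLp.equiv_apply, WithLp.ofLp_fst, WithLp.ofLp_snd]
  set P1 : WithLp 2 (EuclideanSpace ℝ (Fin n) × EuclideanSpace ℝ (Fin m)) →
      WithLp 2 (EuclideanSpace ℝ (Fin n) × EuclideanSpace ℝ (Fin m)) :=
    fun x => toH (PC (x.fst - τ • s), x.snd - τ • PD ((1/τ) • (x.snd - b))) with hP1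
  set P2 : WithLp 2 (EuclideanSpace ℝ (Fin n) × EuclideanSpace ℝ (Fin m)) →
      WithLp 2 (EuclideanSpace ℝ (Fin n) × EuclideanSpace ℝ (Fin m)) :=
    fun x => toH (S (x.fst + Lt x.snd), L (S (x.fst + Lt x.snd))) with hP2
  set T : WithLp 2 (EuclideanSpace ℝ (Fin n) × EuclideanSpace ℝ (Fin m)) →
      WithLp 2 (EuclideanSpace ℝ (Fin n) × EuclideanSpace ℝ (Fin m)) :=
    fun x => x + P2 ((2:ℝ) • P1 x - x) - P1 x with hT
  have hP1fst : ∀ x, (P1 x).fst = PC (x.fst - τ • s) := by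
    intro x; simp [hP1, htoH, WithLp.equiv_symm_apply, WithLp.toLp_fst]
  have hP1snd : ∀ x, (P1 x).snd = x.snd - τ • PD ((1/τ) • (x.snd - b)) := by
    intro x; simp [hP1, htoH, WithLp.equiv_symm_apply, WithLp.toLp_snd]
  have hP2fst : ∀ x, (P2 x).fst = S (x.fst + Lt x.snd) := by
    intro x; simp [hP2, htoH, WithLp.equiv_symm_apply, WithLp.toLp_fst]
  have hP2snd : ∀ x, (P2 x).snd = L (S (x.fst + Lt x.snd)) := by
    intro x; simp [hP2, htoH, WithLp.equiv_symm_apply, WithLp.toLp_snd]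
  -- ====== firm nonexpansiveness of the two prox operators ======
  have firmPC := proj_firm hCconv PC hPC
  have firmPD := proj_firm hDconv PD hPD
  have hτ1 : (1/τ) * τ = 1 := by field_simp
  have h1 : ∀ xa xb, ‖P1 xa - P1 xb‖^2 ≤ ⟪xa - xb, P1 xa - P1 xb⟫ := by
    intro xa xb
    rw [WithLp.prod_norm_sq_eq_of_L2, WithLp.prod_inner_apply,
      WithLp.sub_fst, WithLp.sub_snd, hP1fst, hP1fst, hP1snd, hP1snd]
    exact add_le_add (comp1_firm PC firmPC τ s xa.fst xb.fst)
      (comp2_firm PD firmPD τ hτ b xa.snd xb.snd)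
  have h2 : ∀ xa xb, ‖P2 xa - P2 xb‖^2 ≤ ⟪xa - xb, P2 xa - P2 xb⟫ := by
    intro xa xb
    rw [WithLp.prod_norm_sq_eq_of_L2, WithLp.prod_inner_apply,
      WithLp.sub_fst, WithLp.sub_snd, hP2fst, hP2fst, hP2snd, hP2snd]
    exact graph_firm L Lt hadj _ _ _ _ _ _ (hS1 (xa.fst + Lt xa.snd)) (hS1 (xb.fst + Lt xb.snd))
  -- ====== the iteration in the product space ======
  set X : ℕ → WithLp 2 (EuclideanSpace ℝ (Fin n) × EuclideanSpace ℝ (Fin m)) :=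
    fun k => toH (ubar k, wbar k) with hX
  have hXfst : ∀ k, (X k).fst = ubar k := fun k => by
    simp [hX, htoH, WithLp.equiv_symm_apply, WithLp.toLp_fst]
  have hXsnd : ∀ k, (X k).snd = wbar k := fun k => by
    simp [hX, htoH, WithLp.equiv_symm_apply, WithLp.toLp_snd]
  have hTfst : ∀ x, (T x).fst = x.fst + (P2 ((2:ℝ) • P1 x - x)).fst - (P1 x).fst := by
    intro x; simp only [hT, WithLp.sub_fst, WithLp.add_fst]
  have hTsnd : ∀ x, (T x).snd = x.snd + (P2 ((2:ℝ) • P1 x - x)).snd - (P1 x).snd := by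
    intro x; simp only [hT, WithLp.sub_snd, WithLp.add_snd]
  have hP1Xfst : ∀ k, (P1 (X k)).fst = u k := by
    intro k; rw [hP1fst, hXfst, ← hu]
  have hP1Xsnd : ∀ k, (P1 (X k)).snd = wbar k - τ • wpp k := by
    intro k; rw [hP1snd, hXsnd, ← hwpp]
  have hqfst : ∀ k, ((2:ℝ) • P1 (X k) - X k).fst = (2:ℝ) • u k - ubar k := by
    intro k; rw [WithLp.sub_fst, WithLp.smul_fst, hP1Xfst, hXfst]
  have hqsnd : ∀ k, ((2:ℝ) • P1 (X k) - X k).snd = wbar k - (2*τ) • wpp k := by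
    intro k; rw [WithLp.sub_snd, WithLp.smul_snd, hP1Xsnd, hXsnd]; module
  have hSXq : ∀ k, S (((2:ℝ) • P1 (X k) - X k).fst + Lt (((2:ℝ) • P1 (X k) - X k).snd))
      = up k := by
    intro k; rw [hqfst, hqsnd]; exact hSuniq _ _ (hup k)
  have hP2Xfst : ∀ k, (P2 ((2:ℝ) • P1 (X k) - X k)).fst = up k := by
    intro k; rw [hP2fst]; exact hSXq k
  have hP2Xsnd : ∀ k, (P2 ((2:ℝ) • P1 (X k) - X k)).snd = wp k := by
    intro k; rw [hP2snd, hSXq k, ← hwp]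
  have hseq : ∀ k, X (k+1) = T (X k) := by
    intro k
    apply hext
    · rw [hTfst, hP2Xfst, hP1Xfst, hXfst, hXfst, hubar]
    · rw [hTsnd, hP2Xsnd, hP1Xsnd, hXsnd, hXsnd, hwbar]
      module
  -- ====== the fixed point from the saddle point ======
  have hPCz : PC ((ustar - τ • Lt vstar) - τ • s) = ustar := by
    apply proj_unique hustar ?_ (hPC _).1 (hPC _).2
    intro x hx
    have e : ((ustar - τ • Lt vstar) - τ • s) - ustar = -(τ • (s + Lt vstar)) := by module
    rw [e, inner_neg_left, real_inner_smul_left]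
    have h9 := hsadstar1 x hx
    nlinarith only [h9, hτ]
  have hPDz : PD ((1/τ) • ((L ustar + τ • vstar) - b)) = vstar := by
    apply proj_unique hvstar ?_ (hPD _).1 (hPD _).2
    intro v hv
    have e : (1/τ) • ((L ustar + τ • vstar) - b) - vstar = (1/τ) • (L ustar - b) := by
      rw [show (L ustar + τ • vstar) - b = (L ustar - b) + τ • vstar by abel, smul_add,
        smul_smul, hτ1, one_smul]
      abel
    rw [e, real_inner_smul_left]
    have h0 := hsadstar2 v hv
    have hpos : 0 < 1/τ := by positivity
    nlinarith only [h0, hpos]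
  set zpt := toH (ustar - τ • Lt vstar, L ustar + τ • vstar) with hzpt
  have hzfst : zpt.fst = ustar - τ • Lt vstar := by
    simp [hzpt, htoH, WithLp.equiv_symm_apply, WithLp.toLp_fst]
  have hzsnd : zpt.snd = L ustar + τ • vstar := by
    simp [hzpt, htoH, WithLp.equiv_symm_apply, WithLp.toLp_snd]
  have hP1zfst : (P1 zpt).fst = ustar := by rw [hP1fst, hzfst, hPCz]
  have hP1zsnd : (P1 zpt).snd = L ustar := by
    rw [hP1snd, hzsnd, hPDz]; module
  have hSz : S (((2:ℝ) • P1 zpt - zpt).fst + Lt (((2:ℝ) • P1 zpt - zpt).snd)) = ustar := by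
    rw [WithLp.sub_fst, WithLp.smul_fst, hP1zfst, hzfst,
      WithLp.sub_snd, WithLp.smul_snd, hP1zsnd, hzsnd]
    apply hSuniq
    simp only [map_sub, map_add, map_smul]
    module
  have hTz : T zpt = zpt := by
    apply hext
    · rw [hTfst, hP2fst, hSz, hP1zfst]; abel
    · rw [hTsnd, hP2snd, hSz, hP1zsnd]; abel
  -- ====== apply the abstract convergence result ======
  obtain ⟨xh, hfix, htend⟩ := dr_main P1 P2 h1 h2 T (fun x => rfl) X hseq zpt hTz
  -- ====== extract the limit saddle point ======
  set uh := xh.fst with huh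
  set wh := xh.snd with hwhd
  set uinf := PC (uh - τ • s) with huinf
  set vinf := PD ((1/τ) • (wh - b)) with hvinf
  have huinfC : uinf ∈ C := by rw [huinf]; exact (hPC _).1
  have hvinfD : vinf ∈ D := by rw [hvinf]; exact (hPD _).1
  have hfixP : P2 ((2:ℝ) • P1 xh - xh) = P1 xh := by
    have e : P2 ((2:ℝ) • P1 xh - xh) - P1 xh = T xh - xh := by
      simp only [hT]; abel
    rw [hfix, sub_self] at e
    exact sub_eq_zero.mp e
  have hP1xhfst : (P1 xh).fst = uinf := by rw [hP1fst, ← huh]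
  have hP1xhsnd : (P1 xh).snd = wh - τ • vinf := by
    rw [hP1snd, ← hwhd, ← hvinf]
  have hSh : S (((2:ℝ) • P1 xh - xh).fst + Lt (((2:ℝ) • P1 xh - xh).snd)) = uinf := by
    have h := congrArg (fun y : WithLp 2 (EuclideanSpace ℝ (Fin n) × EuclideanSpace ℝ (Fin m)) => y.fst) hfixP
    rw [hP2fst, hP1xhfst] at h
    exact h
  have hLh : L uinf = wh - τ • vinf := by
    have h := congrArg (fun y : WithLp 2 (EuclideanSpace ℝ (Fin n) × EuclideanSpace ℝ (Fin m)) => y.snd) hfixP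
    rw [hP2snd, hSh, hP1xhsnd] at h
    exact h
  have hwhval : wh = L uinf + τ • vinf := by rw [hLh]; abel
  have hres := hS1 (((2:ℝ) • P1 xh - xh).fst + Lt (((2:ℝ) • P1 xh - xh).snd))
  rw [hSh, WithLp.sub_fst, WithLp.smul_fst, WithLp.sub_snd, WithLp.smul_snd,
    hP1xhfst, hP1xhsnd, ← huh, ← hwhd] at hres
  rw [hwhval] at hres
  simp only [map_sub, map_add, map_smul] at hres
  have huhval : uh = uinf - τ • Lt vinf := by
    linear_combination (norm := module) hres
  -- variational inequalities at the limit
  have hviC := proj_vi hCconv (hPC (uh - τ • s)).1 (hPC (uh - τ • s)).2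
  rw [← huinf] at hviC
  have hsad1 : ∀ x ∈ C, g uinf vinf ≤ g x vinf := by
    intro x hx
    have hvi := hviC x hx
    rw [huhval] at hvi
    have e : ((uinf - τ • Lt vinf) - τ • s) - uinf = -(τ • (s + Lt vinf)) := by module
    rw [e, inner_neg_left, real_inner_smul_left] at hvi
    have h0 : 0 ≤ ⟪s + Lt vinf, x - uinf⟫ := by nlinarith only [hvi, hτ]
    rw [inner_add_left, hadj] at h0
    have h2 : ⟪s, x - uinf⟫ = ⟪x - uinf, s⟫ := real_inner_comm _ _
    have h3 : ⟪vinf, L (x - uinf)⟫ = ⟪L (x - uinf), vinf⟫ := real_inner_comm _ _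
    rw [h2, h3] at h0
    have h4 := hgdiff_u x uinf vinf
    linarith only [h0, h4]
  have hviD := proj_vi hDconv (hPD ((1/τ) • (wh - b))).1 (hPD ((1/τ) • (wh - b))).2
  rw [← hvinf] at hviD
  have hsad2 : ∀ v ∈ D, g uinf v ≤ g uinf vinf := by
    intro v hv
    have hvi := hviD v hv
    rw [hwhval] at hvi
    have e : (1/τ) • ((L uinf + τ • vinf) - b) - vinf = (1/τ) • (L uinf - b) := by
      rw [show (L uinf + τ • vinf) - b = (L uinf - b) + τ • vinf by abel, smul_add,
        smul_smul, hτ1, one_smul]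
      abel
    rw [e, real_inner_smul_left] at hvi
    have hpos : 0 < 1/τ := by positivity
    have h0 : ⟪L uinf - b, v - vinf⟫ ≤ 0 := by nlinarith only [hvi, hpos]
    have h1 := hgdiff_v uinf v vinf
    linarith only [h0, h1]
  have hval : g uinf vinf = g ustar vstar := by
    have le1 := (hsaddle uinf huinfC vstar hvstar).2
    have le2 := hsad2 vstar hvstar
    have le3 := hsad1 ustar hustar
    have le4 := (hsaddle ustar hustar vinf hvinfD).1
    linarith only [le1, le2, le3, le4]
  have hfuinf : f uinf = g uinf vinf := hfmax _ _ hvinfD hsad2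
  have hfDvinf : fD vinf = g uinf vinf := hfDmin _ _ huinfC hsad1
  -- ====== convergence of the component sequences ======
  have hcfst : Continuous
      (fun x : WithLp 2 (EuclideanSpace ℝ (Fin n) × EuclideanSpace ℝ (Fin m)) => x.fst) :=
    continuous_fst.comp (WithLp.prod_continuous_ofLp ..)
  have hcsnd : Continuous
      (fun x : WithLp 2 (EuclideanSpace ℝ (Fin n) × EuclideanSpace ℝ (Fin m)) => x.snd) :=
    continuous_snd.comp (WithLp.prod_continuous_ofLp ..)
  have htub : Filter.Tendsto ubar Filter.atTop (nhds uh) := by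
    have h := (hcfst.tendsto xh).comp htend
    refine h.congr fun k => ?_
    simp only [Function.comp_apply]
    exact hXfst k
  have htwb : Filter.Tendsto wbar Filter.atTop (nhds wh) := by
    have h := (hcsnd.tendsto xh).comp htend
    refine h.congr fun k => ?_
    simp only [Function.comp_apply]
    exact hXsnd k
  have hPCcont : Continuous PC := by
    have : LipschitzWith 1 PC := by
      apply LipschitzWith.of_dist_le_mul
      intro p q
      rw [dist_eq_norm, dist_eq_norm, NNReal.coe_one, one_mul]
      exact firm_nonexp firmPC p q
    exact this.continuous
  have hPDcont : Continuous PD := by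
    have : LipschitzWith 1 PD := by
      apply LipschitzWith.of_dist_le_mul
      intro p q
      rw [dist_eq_norm, dist_eq_norm, NNReal.coe_one, one_mul]
      exact firm_nonexp firmPD p q
    exact this.continuous
  have htu : Filter.Tendsto u Filter.atTop (nhds uinf) := by
    have h0 : Filter.Tendsto (fun k => ubar k - τ • s) Filter.atTop (nhds (uh - τ • s)) :=
      htub.sub tendsto_const_nhds
    have h := (hPCcont.tendsto (uh - τ • s)).comp h0
    rw [huinf]
    refine h.congr fun k => ?_
    simp only [Function.comp_apply]
    exact (hu k).symm
  have htwpp : Filter.Tendsto wpp Filter.atTop (nhds vinf) := by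
    have h0 : Filter.Tendsto (fun k => (1/τ) • (wbar k - b)) Filter.atTop
        (nhds ((1/τ) • (wh - b))) := (htwb.sub tendsto_const_nhds).const_smul (1/τ)
    have h := (hPDcont.tendsto ((1/τ) • (wh - b))).comp h0
    rw [hvinf]
    refine h.congr fun k => ?_
    simp only [Function.comp_apply]
    exact (hwpp k).symm
  -- ====== convergence of the values ======
  obtain ⟨MD, hMD⟩ : ∃ M, ∀ v ∈ D, ‖v‖ ≤ M := by
    obtain ⟨r, hr⟩ := hDcomp.isBounded.subset_closedBall 0
    exact ⟨r, fun v hv => by simpa [mem_closedBall_zero_iff] using hr hv⟩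
  obtain ⟨MC, hMC⟩ : ∃ M, ∀ x ∈ C, ‖x‖ ≤ M := by
    obtain ⟨r, hr⟩ := hCcomp.isBounded.subset_closedBall 0
    exact ⟨r, fun x hx => by simpa [mem_closedBall_zero_iff] using hr hx⟩
  have hMD0 : 0 ≤ MD := le_trans (norm_nonneg _) (hMD _ hDne.choose_spec)
  have hfLip : ∀ p q, f p ≤ f q + (‖s‖ + ‖L‖ * MD) * ‖p - q‖ := by
    intro p q
    rw [hf p]
    apply csSup_le (hDne.image _)
    rintro _ ⟨v, hv, rfl⟩
    have hd := hgdiff_u p q v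
    have i1 := real_inner_le_norm (p - q) s
    have i2 := real_inner_le_norm (L (p - q)) v
    have i3 := (L.le_opNorm (p - q))
    have i5 := hfle q v hv
    have i6 : ‖L (p - q)‖ * ‖v‖ ≤ (‖L‖ * ‖p - q‖) * MD :=
      mul_le_mul i3 (hMD v hv) (norm_nonneg v) (by positivity)
    nlinarith only [hd, i1, i2, i5, i6, norm_nonneg (p - q)]
  have hfDLip : ∀ p q, fD q - (‖L‖ * MC + ‖b‖) * ‖p - q‖ ≤ fD p := by
    intro p q
    rw [hfD p]
    apply le_csInf (hCne.image _)
    rintro _ ⟨x, hx, rfl⟩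
    dsimp only
    have hd := hgdiff_v x p q
    have i1 := real_inner_le_norm (L x - b) (q - p)
    have e : ⟪L x - b, p - q⟫ = -⟪L x - b, q - p⟫ := by
      rw [show p - q = -(q - p) by abel, inner_neg_right]
    have i2 : ‖L x - b‖ ≤ ‖L‖ * MC + ‖b‖ := by
      calc ‖L x - b‖ ≤ ‖L x‖ + ‖b‖ := norm_sub_le _ _
      _ ≤ ‖L‖ * ‖x‖ + ‖b‖ := by
          have := L.le_opNorm x
          linarith
      _ ≤ ‖L‖ * MC + ‖b‖ := by
          have h3 := hMC x hx
          have h4 : ‖L‖ * ‖x‖ ≤ ‖L‖ * MC :=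
            mul_le_mul_of_nonneg_left h3 (norm_nonneg _)
          linarith
    have i5 := hfDle x q hx
    have i7 := mul_le_mul_of_nonneg_right i2 (norm_nonneg (q - p))
    have hnq : ‖q - p‖ = ‖p - q‖ := norm_sub_rev _ _
    rw [hnq] at i1 i7
    nlinarith only [hd, i1, e, i5, i7, hnq]
  have hnorm0 : Filter.Tendsto (fun k => ‖u k - uinf‖) Filter.atTop (nhds 0) := by
    rw [← tendsto_iff_norm_sub_tendsto_zero]
    exact htu
  have hnorm0' : Filter.Tendsto (fun k => ‖wpp k - vinf‖) Filter.atTop (nhds 0) := by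
    rw [← tendsto_iff_norm_sub_tendsto_zero]
    exact htwpp
  have hftend : Filter.Tendsto (fun k => f (u k)) Filter.atTop (nhds (g ustar vstar)) := by
    rw [← hval, ← hfuinf]
    have hupper : Filter.Tendsto (fun k => f uinf + (‖s‖ + ‖L‖ * MD) * ‖u k - uinf‖)
        Filter.atTop (nhds (f uinf)) := by
      have h := (hnorm0.const_mul (‖s‖ + ‖L‖ * MD)).const_add (f uinf)
      simpa using h
    have hlower : Filter.Tendsto (fun k => g (u k) vinf) Filter.atTop (nhds (f uinf)) := by
      rw [hfuinf]
      exact (((hgCcont vinf).tendsto uinf).comp htu).congr fun k => rfl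
    apply tendsto_of_tendsto_of_tendsto_of_le_of_le hlower hupper
    · intro k
      exact hfle (u k) vinf hvinfD
    · intro k
      exact hfLip (u k) uinf
  have hfDtend : Filter.Tendsto (fun k => fD (wpp k)) Filter.atTop (nhds (g ustar vstar)) := by
    rw [← hval, ← hfDvinf]
    have hlower : Filter.Tendsto (fun k => fD vinf - (‖L‖ * MC + ‖b‖) * ‖wpp k - vinf‖)
        Filter.atTop (nhds (fD vinf)) := by
      have h := (hnorm0'.const_mul (‖L‖ * MC + ‖b‖)).const_sub (fD vinf)
      simpa using h
    have hupper : Filter.Tendsto (fun k => g uinf (wpp k)) Filter.atTop (nhds (fD vinf)) := by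
      rw [hfDvinf]
      exact (((hgDcont uinf).tendsto vinf).comp htwpp).congr fun k => rfl
    apply tendsto_of_tendsto_of_tendsto_of_le_of_le hlower hupper
    · intro k
      exact hfDLip (wpp k) vinf
    · intro k
      exact hfDle uinf (wpp k) huinfC
  exact ⟨hfeas, hfstar, hfDstar, hftend, hfDtend, hlast⟩
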